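/- Let L/K be a field extension, n a positive integer, R = K[x] the polynomial ring in one variable, S = L[x_1,…,x_n], and R → S the ring map extending K ⊆ L and sending x to x_1. Then S is free as an R-module, and S is a content R-algebra if and only if K is algebraically closed in L. -/

import Mathlib

section OhmRushDefs

variable {R S : Type*} [CommRing R] [CommRing S]

/-- The Ohm–Rush content of an element `s` of an `R`-algebra `S` (given by a ring
homomorphism `f : R →+* S`): the intersection of all ideals `I` of `R` with `s ∈ IS`. -/
def ORContent (f : R →+* S) (s : S) : Ideal R :=
  sInf {I : Ideal R | s ∈ Ideal.map f I}

/-- `S` is an Ohm–Rush `R`-algebra if every `s ∈ S` lies in the extension of its content. -/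
def IsOhmRushAlgebra (f : R →+* S) : Prop :=
  ∀ s : S, s ∈ Ideal.map f (ORContent f s)

/-- Flatness of a ring homomorphism. -/
def RingHomFlat (f : R →+* S) : Prop :=
  letI := f.toAlgebra; Module.Flat R S

/-- Faithful flatness of a ring homomorphism. -/
def RingHomFaithfullyFlat (f : R →+* S) : Prop :=
  letI := f.toAlgebra; Module.FaithfullyFlat R S

/-- Module-freeness of a ring homomorphism. -/
def RingHomFree (f : R →+* S) : Prop :=
  letI := f.toAlgebra; Module.Free R S

/-- Weak content algebra: Ohm–Rush and `√c(fg) = √(c(f)c(g))`. -/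
def IsWeakContentAlgebra (f : R →+* S) : Prop :=
  IsOhmRushAlgebra f ∧ ∀ s t : S,
    (ORContent f (s * t)).radical = (ORContent f s * ORContent f t).radical

/-- Semicontent algebra: faithfully flat Ohm–Rush, and for every multiplicative subset `W`
of `R`, if `c(s)R_W = R_W` then `c(st)R_W = c(t)R_W`. -/
def IsSemicontentAlgebra (f : R →+* S) : Prop :=
  IsOhmRushAlgebra f ∧ RingHomFaithfullyFlat f ∧
    ∀ (W : Submonoid R) (s t : S),
      Ideal.map (algebraMap R (Localization W)) (ORContent f s) = ⊤ →
      Ideal.map (algebraMap R (Localization W)) (ORContent f (s * t)) =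
        Ideal.map (algebraMap R (Localization W)) (ORContent f t)

/-- Content algebra: faithfully flat Ohm–Rush satisfying the Dedekind–Mertens type formula. -/
def IsContentAlgebra (f : R →+* S) : Prop :=
  IsOhmRushAlgebra f ∧ RingHomFaithfullyFlat f ∧
    ∀ s t : S, ∃ n : ℕ, 0 < n ∧
      ORContent f s ^ n * ORContent f t = ORContent f s ^ (n - 1) * ORContent f (s * t)

/-- A ring homomorphism satisfies INC if comparable primes of `S` with the same
contraction to `R` are equal. -/
def SatisfiesINC (f : R →+* S) : Prop :=
  ∀ Q Q' : Ideal S, Q.IsPrime → Q'.IsPrime → Q ≤ Q' →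
    Ideal.comap f Q = Ideal.comap f Q' → Q = Q'

/-- A valuation domain: a domain whose divisibility is total. -/
def IsValuationDomain (A : Type*) [CommRing A] : Prop :=
  IsDomain A ∧ ∀ a b : A, ∃ c : A, a * c = b ∨ b * c = a

/-- A Prüfer domain: a domain whose localization at every maximal ideal is a
valuation domain. -/
def IsPruferDomain (A : Type*) [CommRing A] : Prop :=
  IsDomain A ∧ ∀ (P : Ideal A) (hP : P.IsMaximal),
    haveI := hP.isPrime
    IsValuationDomain (Localization.AtPrime P)

end OhmRushDefs

namespace ORProof

open Polynomial

/-! ### Generic ideal lemmas -/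

theorem span_singleton_mul_span {R : Type*} [CommRing R] (p : R) (X : Set R) :
    Ideal.span {p} * Ideal.span X = Ideal.span ((p * ·) '' X) := by
  apply le_antisymm
  · rw [Ideal.mul_le]
    intro r hr s hs
    obtain ⟨a, ha⟩ := Ideal.mem_span_singleton'.mp hr
    have hps' : p * s ∈ Ideal.span ((p * ·) '' X) := by
      refine Submodule.span_induction
        (p := fun s _ => p * s ∈ Ideal.span ((p * ·) '' X)) ?_ ?_ ?_ ?_ hs
      · intro x hx
        exact Ideal.subset_span ⟨x, hx, rfl⟩
      · simpa using (Ideal.span ((p * ·) '' X)).zero_mem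
      · intro x y _ _ hx hy
        rw [mul_add]
        exact Ideal.add_mem _ hx hy
      · intro c x _ hx
        rw [smul_eq_mul, show p * (c * x) = c * (p * x) by ring]
        exact Ideal.mul_mem_left _ _ hx
    have hrs : r * s = a * (p * s) := by rw [← ha]; ring
    rw [hrs]
    exact Ideal.mul_mem_left _ _ hps'
  · rw [Ideal.span_le]
    rintro y ⟨x, hx, rfl⟩
    exact Ideal.mul_mem_mul (Ideal.mem_span_singleton_self p) (Ideal.subset_span hx)

theorem orcontent_zero {R S : Type*} [CommRing R] [CommRing S] (f : R →+* S) :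
    ORContent f (0 : S) = ⊥ := by
  refine le_bot_iff.mp (sInf_le ?_)
  show (0 : S) ∈ Ideal.map f ⊥
  exact zero_mem _

theorem orcontent_le_of_mem {R S : Type*} [CommRing R] [CommRing S] (f : R →+* S)
    {s : S} {I : Ideal R} (h : s ∈ Ideal.map f I) : ORContent f s ≤ I :=
  sInf_le h

/-! ### Transfer along ring equivalences -/

section Transfer

variable {R S S' : Type*} [CommRing R] [CommRing S] [CommRing S']

theorem map_ringHomCoe_eq_comap (e : S ≃+* S') (J : Ideal S) :
    J.map (e : S →+* S') = J.comap (e.symm : S' →+* S) := by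
  apply le_antisymm
  · rw [Ideal.map_le_iff_le_comap]
    intro x hx
    simp only [Ideal.mem_comap, RingHom.coe_coe, RingEquiv.symm_apply_apply]
    exact hx
  · intro y hy
    have h1 : e.symm y ∈ J := hy
    have h2 := Ideal.mem_map_of_mem (e : S →+* S') h1
    simpa using h2

theorem mem_map_ringHomCoe (e : S ≃+* S') (J : Ideal S) (s : S) :
    e s ∈ J.map (e : S →+* S') ↔ s ∈ J := by
  rw [map_ringHomCoe_eq_comap]
  simp [Ideal.mem_comap]

theorem mem_map_comp_iff (e : S ≃+* S') (f : R →+* S) (I : Ideal R) (s : S) :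
    e s ∈ I.map ((e : S →+* S').comp f) ↔ s ∈ I.map f := by
  rw [← Ideal.map_map, mem_map_ringHomCoe]

theorem orcontent_comp (e : S ≃+* S') (f : R →+* S) (s : S) :
    ORContent ((e : S →+* S').comp f) (e s) = ORContent f s := by
  unfold ORContent
  congr 1
  ext I
  simp only [Set.mem_setOf_eq]
  rw [mem_map_comp_iff]

theorem isOhmRush_comp (e : S ≃+* S') (f : R →+* S) :
    IsOhmRushAlgebra ((e : S →+* S').comp f) ↔ IsOhmRushAlgebra f := by
  constructor
  · intro H s
    have h := H (e s)
    rwa [orcontent_comp, mem_map_comp_iff] at h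
  · intro H s'
    obtain ⟨s, rfl⟩ := e.surjective s'
    rw [orcontent_comp, mem_map_comp_iff]
    exact H s

theorem ringHomFree_of_comp (e : S ≃+* S') (f : R →+* S)
    (h : RingHomFree ((e : S →+* S').comp f)) : RingHomFree f := by
  letI i1 : Algebra R S := f.toAlgebra
  letI i2 : Algebra R S' := ((e : S →+* S').comp f).toAlgebra
  haveI h2 : Module.Free R S' := h
  refine Module.Free.of_equiv (?_ : S' ≃ₗ[R] S)
  refine
    { toFun := e.symm
      invFun := e
      left_inv := fun y => e.apply_symm_apply y
      right_inv := fun x => e.symm_apply_apply x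
      map_add' := fun x y => map_add _ x y
      map_smul' := ?_ }
  intro r x
  simp only [RingHom.id_apply]
  rw [Algebra.smul_def, Algebra.smul_def, RingHom.algebraMap_toAlgebra,
    RingHom.algebraMap_toAlgebra, RingHom.comp_apply, RingHom.coe_coe, map_mul,
    RingEquiv.symm_apply_apply]

theorem ringHomFF_of_comp (e : S ≃+* S') (f : R →+* S)
    (h : RingHomFaithfullyFlat ((e : S →+* S').comp f)) : RingHomFaithfullyFlat f := by
  letI i1 : Algebra R S := f.toAlgebra
  letI i2 : Algebra R S' := ((e : S →+* S').comp f).toAlgebra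
  haveI h2 : Module.FaithfullyFlat R S' := h
  refine Module.FaithfullyFlat.of_linearEquiv _ _ (?_ : S ≃ₗ[R] S')
  refine
    { toFun := e
      invFun := e.symm
      left_inv := fun y => e.symm_apply_apply y
      right_inv := fun x => e.apply_symm_apply x
      map_add' := fun x y => map_add _ x y
      map_smul' := ?_ }
  intro r x
  simp only [RingHom.id_apply]
  rw [Algebra.smul_def, Algebra.smul_def, RingHom.algebraMap_toAlgebra,
    RingHom.algebraMap_toAlgebra, RingHom.comp_apply, RingHom.coe_coe, map_mul]

theorem comp_symm_comp (e : S ≃+* S') (f : R →+* S) :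
    (e.symm : S' →+* S).comp ((e : S →+* S').comp f) = f := by
  ext x
  simp

theorem ringHomFF_comp_iff (e : S ≃+* S') (f : R →+* S) :
    RingHomFaithfullyFlat ((e : S →+* S').comp f) ↔ RingHomFaithfullyFlat f := by
  constructor
  · exact ringHomFF_of_comp e f
  · intro h
    apply ringHomFF_of_comp e.symm ((e : S →+* S').comp f)
    rwa [comp_symm_comp]

theorem isContentAlgebra_comp (e : S ≃+* S') (f : R →+* S) :
    IsContentAlgebra ((e : S →+* S').comp f) ↔ IsContentAlgebra f := by
  unfold IsContentAlgebra
  rw [isOhmRush_comp e f, ringHomFF_comp_iff e f]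
  refine and_congr_right fun _ => and_congr_right fun _ => ?_
  constructor
  · intro H s t
    obtain ⟨n, hn, hf⟩ := H (e s) (e t)
    refine ⟨n, hn, ?_⟩
    rwa [orcontent_comp, orcontent_comp, ← map_mul, orcontent_comp] at hf
  · intro H s' t'
    obtain ⟨s, rfl⟩ := e.surjective s'
    obtain ⟨t, rfl⟩ := e.surjective t'
    obtain ⟨n, hn, hf⟩ := H s t
    exact ⟨n, hn, by rwa [orcontent_comp, orcontent_comp, ← map_mul, orcontent_comp]⟩

end Transfer

/-! ### The core theory: `A[X]` over `K[X]` via `Polynomial.map (algebraMap K A)` -/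

section Core

variable {K : Type*} [Field K] {A : Type*} [CommRing A] [Nontrivial A] [Algebra K A]

noncomputable local instance coreAlgebra : Algebra (Polynomial K) (Polynomial A) :=
  (Polynomial.mapRingHom (algebraMap K A)).toAlgebra

theorem psmul_def (r : Polynomial K) (h : Polynomial A) :
    r • h = r.map (algebraMap K A) * h := by
  rw [Algebra.smul_def, RingHom.algebraMap_toAlgebra, coe_mapRingHom]

variable {ι : Type*} [DecidableEq ι] (b : Module.Basis ι K A)

/-- The `i`-th coordinate (a polynomial in `K[X]`) of a polynomial in `A[X]`, with respect
to a `K`-basis of `A`. -/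
noncomputable def coordFun (i : ι) (h : Polynomial A) : Polynomial K :=
  h.sum fun k a => Polynomial.monomial k (b.coord i a)

theorem coordFun_coeff (i : ι) (h : Polynomial A) (k : ℕ) :
    (coordFun b i h).coeff k = b.coord i (h.coeff k) := by
  rw [coordFun, Polynomial.sum_def, Polynomial.finset_sum_coeff]
  simp only [Polynomial.coeff_monomial]
  rw [Finset.sum_ite_eq' h.support k fun j => b.coord i (h.coeff j)]
  split_ifs with hk
  · rfl
  · rw [Polynomial.notMem_support_iff.mp hk, map_zero]

theorem coordFun_add (i : ι) (g h : Polynomial A) :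
    coordFun b i (g + h) = coordFun b i g + coordFun b i h := by
  ext k
  simp [coordFun_coeff, map_add]

theorem coordFun_map_mul (i : ι) (p : Polynomial K) (h : Polynomial A) :
    coordFun b i (p.map (algebraMap K A) * h) = p * coordFun b i h := by
  ext k
  rw [coordFun_coeff, Polynomial.coeff_mul, Polynomial.coeff_mul]
  rw [map_sum (b.coord i) (fun x => (p.map (algebraMap K A)).coeff x.1 * h.coeff x.2)
    (Finset.HasAntidiagonal.antidiagonal k)]
  refine Finset.sum_congr rfl fun x _ => ?_
  rw [Polynomial.coeff_map, coordFun_coeff, ← Algebra.smul_def, map_smul, smul_eq_mul]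

theorem coordFun_smul (i : ι) (p : Polynomial K) (h : Polynomial A) :
    coordFun b i (p • h) = p * coordFun b i h := by
  rw [psmul_def, coordFun_map_mul]

theorem coordFun_C (i : ι) (a : A) :
    coordFun b i (Polynomial.C a) = Polynomial.C (b.coord i a) := by
  ext k
  rw [coordFun_coeff, Polynomial.coeff_C, Polynomial.coeff_C]
  split_ifs with h
  · rfl
  · rw [map_zero]

/-- The coordinate function as a `K[X]`-linear map. -/
noncomputable def coordLM (i : ι) : Polynomial A →ₗ[Polynomial K] Polynomial K where
  toFun := coordFun b i
  map_add' := fun x y => coordFun_add b i x y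
  map_smul' := fun r x => coordFun_smul b i r x

@[simp] theorem coordLM_apply (i : ι) (h : Polynomial A) :
    coordLM b i h = coordFun b i h := rfl

/-- The (finite) set of indices where coordinates of `h` may be nonzero. -/
noncomputable def coordSupport (h : Polynomial A) : Finset ι :=
  h.support.biUnion fun k => (b.repr (h.coeff k)).support

theorem expansion (h : Polynomial A) :
    ∑ i ∈ coordSupport b h, coordFun b i h • Polynomial.C (b i) = h := by
  ext k
  rw [Polynomial.finset_sum_coeff]
  have hterm : ∀ i, (coordFun b i h • Polynomial.C (b i)).coeff k
      = b.repr (h.coeff k) i • b i := by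
    intro i
    rw [psmul_def, Polynomial.coeff_mul_C, Polynomial.coeff_map, coordFun_coeff,
      Module.Basis.coord_apply, Algebra.smul_def]
  simp_rw [hterm]
  by_cases hk : k ∈ h.support
  · have hrepr := b.linearCombination_repr (h.coeff k)
    rw [Finsupp.linearCombination_apply, Finsupp.sum] at hrepr
    conv_rhs => rw [← hrepr]
    refine Eq.symm (Finset.sum_subset (fun i hi => Finset.mem_biUnion.2 ⟨k, hk, hi⟩) ?_)
    intro i _ hi
    rw [Finsupp.notMem_support_iff.mp hi, zero_smul]
  · rw [Polynomial.notMem_support_iff.mp hk]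
    simp

theorem mem_map_iff (I : Ideal (Polynomial K)) (h : Polynomial A) :
    h ∈ I.map (Polynomial.mapRingHom (algebraMap K A)) ↔ ∀ i, coordFun b i h ∈ I := by
  have key : ∀ x : Polynomial A,
      x ∈ I.map (Polynomial.mapRingHom (algebraMap K A)) ↔
        x ∈ I • (⊤ : Submodule (Polynomial K) (Polynomial A)) := by
    intro x
    rw [Ideal.smul_top_eq_map, Submodule.restrictScalars_mem, RingHom.algebraMap_toAlgebra]
  constructor
  · intro hm i
    refine Submodule.smul_induction_on ((key h).mp hm) ?_ ?_
    · intro r hr t _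
      rw [coordFun_smul]
      exact Ideal.mul_mem_right _ _ hr
    · intro x y hx hy
      rw [coordFun_add]
      exact I.add_mem hx hy
  · intro hc
    rw [key, ← expansion b h]
    exact Submodule.sum_mem _ fun i _ => Submodule.smul_mem_smul (hc i) Submodule.mem_top

theorem orcontent_eq (h : Polynomial A) :
    ORContent (Polynomial.mapRingHom (algebraMap K A)) h
      = Ideal.span (Set.range fun i => coordFun b i h) := by
  apply le_antisymm
  · apply sInf_le
    show h ∈ Ideal.map (Polynomial.mapRingHom (algebraMap K A)) _
    rw [mem_map_iff b]
    exact fun i => Ideal.subset_span ⟨i, rfl⟩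
  · refine le_sInf fun I hI => ?_
    have hI' : h ∈ I.map (Polynomial.mapRingHom (algebraMap K A)) := hI
    rw [mem_map_iff b] at hI'
    rw [Ideal.span_le]
    rintro x ⟨i, rfl⟩
    exact hI' i

include b in
theorem isOhmRush : IsOhmRushAlgebra (Polynomial.mapRingHom (algebraMap K A)) := by
  intro h
  rw [mem_map_iff b, orcontent_eq b]
  exact fun i => Ideal.subset_span ⟨i, rfl⟩

include b in
theorem freeAux : RingHomFree (Polynomial.mapRingHom (algebraMap K A)) := by
  have hli : LinearIndependent (Polynomial K) (fun i : ι => Polynomial.C (b i)) := by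
    rw [linearIndependent_iff]
    intro l hl
    refine Finsupp.ext fun j => ?_
    have h0 := congrArg (coordLM b j) hl
    rw [map_zero, Finsupp.linearCombination_apply, Finsupp.sum, map_sum] at h0
    simp only [map_smul, coordLM_apply, coordFun_C, Module.Basis.coord_apply, Module.Basis.repr_self,
      Finsupp.single_apply, smul_eq_mul, apply_ite Polynomial.C, Polynomial.C_1, Polynomial.C_0,
      mul_ite, mul_one, mul_zero] at h0
    rw [Finset.sum_ite_eq' l.support j fun i => l i] at h0
    simp only [Finsupp.coe_zero, Pi.zero_apply]
    split_ifs at h0 with hj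
    · exact h0
    · exact Finsupp.notMem_support_iff.mp hj
  have hsp : ⊤ ≤ Submodule.span (Polynomial K)
      (Set.range fun i : ι => Polynomial.C (b i)) := by
    intro h _
    rw [← expansion b h]
    exact Submodule.sum_mem _ fun i _ =>
      Submodule.smul_mem _ _ (Submodule.subset_span ⟨i, rfl⟩)
  exact Module.Free.of_basis (Module.Basis.mk hli hsp)

include b in
theorem faithfullyFlatAux : RingHomFaithfullyFlat (Polynomial.mapRingHom (algebraMap K A)) := by
  haveI : Module.Free (Polynomial K) (Polynomial A) := freeAux b
  show Module.FaithfullyFlat (Polynomial K) (Polynomial A)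
  infer_instance

include b in
theorem orcontent_smul (p : Polynomial K) (h : Polynomial A) :
    ORContent (Polynomial.mapRingHom (algebraMap K A)) (p.map (algebraMap K A) * h)
      = Ideal.span {p} * ORContent (Polynomial.mapRingHom (algebraMap K A)) h := by
  rw [orcontent_eq b, orcontent_eq b, span_singleton_mul_span]
  congr 1
  rw [show (fun i => coordFun b i (p.map (algebraMap K A) * h))
      = (p * ·) ∘ fun i => coordFun b i h from funext fun i => coordFun_map_mul b i p h]
  rw [Set.range_comp]

include b in
theorem isContentAlgebra_of_prime [IsDomain A]
    (Hp : ∀ π : Polynomial K, Prime π → Prime (π.map (algebraMap K A))) :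
    IsContentAlgebra (Polynomial.mapRingHom (algebraMap K A)) := by
  refine ⟨isOhmRush b, faithfullyFlatAux b, fun s t => ⟨1, one_pos, ?_⟩⟩
  rw [pow_one, pow_zero, Ideal.one_eq_top, Ideal.top_mul]
  have factor : ∀ s : Polynomial A, s ≠ 0 → ∃ (a : Polynomial K) (s' : Polynomial A),
      s = a.map (algebraMap K A) * s' ∧
      ORContent (Polynomial.mapRingHom (algebraMap K A)) s = Ideal.span {a} ∧
      ORContent (Polynomial.mapRingHom (algebraMap K A)) s' = ⊤ := by
    intro s hs0
    obtain ⟨a, ha⟩ :=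
      (IsPrincipalIdealRing.principal
        (ORContent (Polynomial.mapRingHom (algebraMap K A)) s)).principal
    rw [Ideal.submodule_span_eq] at ha
    have hOR := isOhmRush b s
    rw [ha] at hOR
    rw [Ideal.map_span, Set.image_singleton, Ideal.mem_span_singleton] at hOR
    obtain ⟨s', hs'⟩ := hOR
    rw [coe_mapRingHom] at hs'
    have hca : ORContent (Polynomial.mapRingHom (algebraMap K A)) s
        = Ideal.span {a} * ORContent (Polynomial.mapRingHom (algebraMap K A)) s' := by
      rw [hs', orcontent_smul b]
    have ha0 : a ≠ 0 := by
      rintro rfl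
      rw [Polynomial.map_zero, zero_mul] at hs'
      exact hs0 hs'
    refine ⟨a, s', hs', ha, ?_⟩
    have h1 : Ideal.span {a} = Ideal.span {a}
        * ORContent (Polynomial.mapRingHom (algebraMap K A)) s' := ha ▸ hca
    have h2 : a ∈ Ideal.span {a}
        * ORContent (Polynomial.mapRingHom (algebraMap K A)) s' :=
      h1 ▸ Ideal.mem_span_singleton_self a
    obtain ⟨z, hz, hz'⟩ := Ideal.mem_span_singleton_mul.mp h2
    have hz1 : z = 1 := mul_left_cancel₀ ha0 (hz'.trans (mul_one a).symm)
    rw [Ideal.eq_top_iff_one]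
    rwa [hz1] at hz
  by_cases hs0 : s = 0
  · subst hs0
    rw [zero_mul, orcontent_zero, Ideal.bot_mul]
  by_cases ht0 : t = 0
  · subst ht0
    rw [mul_zero, orcontent_zero, Ideal.mul_bot]
  obtain ⟨a, s', hs', hcs, hcs'⟩ := factor s hs0
  obtain ⟨a₂, t', ht', hct, hct'⟩ := factor t ht0
  have hu : ORContent (Polynomial.mapRingHom (algebraMap K A)) (s' * t') = ⊤ := by
    by_contra hne
    obtain ⟨M, hM, hle⟩ := Ideal.exists_le_maximal _ hne
    obtain ⟨π, hπ⟩ := (IsPrincipalIdealRing.principal M).principal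
    rw [Ideal.submodule_span_eq] at hπ
    have hdvd : π.map (algebraMap K A) ∣ s' * t' := by
      have h1 := isOhmRush b (s' * t')
      have h2 := Ideal.map_mono hle h1
      rw [hπ, Ideal.map_span, Set.image_singleton, Ideal.mem_span_singleton,
        coe_mapRingHom] at h2
      exact h2
    have hπ0 : π ≠ 0 := by
      rintro rfl
      rw [Polynomial.map_zero, zero_dvd_iff] at hdvd
      rcases mul_eq_zero.mp hdvd with h | h
      · rw [h, orcontent_zero] at hcs'
        have h1 : (1 : Polynomial K) ∈ (⊥ : Ideal (Polynomial K)) :=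
          hcs' ▸ Submodule.mem_top
        rw [Ideal.mem_bot] at h1
        exact one_ne_zero h1
      · rw [h, orcontent_zero] at hct'
        have h1 : (1 : Polynomial K) ∈ (⊥ : Ideal (Polynomial K)) :=
          hct' ▸ Submodule.mem_top
        rw [Ideal.mem_bot] at h1
        exact one_ne_zero h1
    have hprime : Prime π := by
      have hp1 : (Ideal.span {π}).IsPrime := hπ ▸ hM.isPrime
      exact (Ideal.span_singleton_prime hπ0).mp hp1
    rcases (Hp π hprime).2.2 _ _ hdvd with hd | hd
    · have h3 : s' ∈ Ideal.map (Polynomial.mapRingHom (algebraMap K A)) M := by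
        rw [hπ, Ideal.map_span, Set.image_singleton, Ideal.mem_span_singleton, coe_mapRingHom]
        exact hd
      have h4 := orcontent_le_of_mem _ h3
      rw [hcs'] at h4
      exact hM.ne_top (top_le_iff.mp h4)
    · have h3 : t' ∈ Ideal.map (Polynomial.mapRingHom (algebraMap K A)) M := by
        rw [hπ, Ideal.map_span, Set.image_singleton, Ideal.mem_span_singleton, coe_mapRingHom]
        exact hd
      have h4 := orcontent_le_of_mem _ h3
      rw [hct'] at h4
      exact hM.ne_top (top_le_iff.mp h4)
  calc ORContent (Polynomial.mapRingHom (algebraMap K A)) s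
        * ORContent (Polynomial.mapRingHom (algebraMap K A)) t
      = Ideal.span {a} * Ideal.span {a₂} := by rw [hcs, hct]
    _ = Ideal.span {a * a₂} := by rw [Ideal.span_singleton_mul_span_singleton]
    _ = Ideal.span {a * a₂}
        * ORContent (Polynomial.mapRingHom (algebraMap K A)) (s' * t') := by
        rw [hu, Ideal.mul_top]
    _ = ORContent (Polynomial.mapRingHom (algebraMap K A))
        (((a * a₂).map (algebraMap K A)) * (s' * t')) := (orcontent_smul b _ _).symm
    _ = ORContent (Polynomial.mapRingHom (algebraMap K A)) (s * t) := by
        congr 1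
        rw [Polynomial.map_mul, hs', ht']
        ring

end Core

/-! ### Irreducibility descent for algebraically closed subfields -/

section Descent

variable {K L : Type*} [Field K] [Field L] [Algebra K L]

theorem monic_dvd_lift
    (halg : ∀ x : L, IsAlgebraic K x → x ∈ (algebraMap K L).range)
    {π : Polynomial K} (hπm : π.Monic) {w : Polynomial L} (hwm : w.Monic)
    (hdvd : w ∣ π.map (algebraMap K L)) :
    ∃ w₀ : Polynomial K, w₀.map (algebraMap K L) = w := by
  have h1 := integralClosure.mem_lifts_of_monic_of_dvd_map L hπm hwm hdvd
  rw [Polynomial.lifts_iff_coeff_lifts] at h1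
  rw [← Polynomial.mem_lifts]
  refine (Polynomial.lifts_iff_coeff_lifts w).mpr fun n => ?_
  obtain ⟨c, hc⟩ := h1 n
  have hint : IsIntegral K (w.coeff n) := by
    rw [← hc]
    exact c.2
  obtain ⟨y, hy⟩ := halg (w.coeff n) hint.isAlgebraic
  exact ⟨y, hy⟩

theorem irreducible_map_of_closed
    (halg : ∀ x : L, IsAlgebraic K x → x ∈ (algebraMap K L).range)
    {π : Polynomial K} (hm : π.Monic) (hirr : Irreducible π) :
    Irreducible (π.map (algebraMap K L)) := by
  have hd0 : π.natDegree ≠ 0 := by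
    intro h0
    exact hirr.not_isUnit (by rw [(hm.natDegree_eq_zero).mp h0]; exact isUnit_one)
  have hmL : (π.map (algebraMap K L)).Monic := hm.map _
  constructor
  · intro hun
    have hd := Polynomial.natDegree_eq_zero_of_isUnit hun
    rw [hm.natDegree_map] at hd
    exact hd0 hd
  · intro u v huv
    have hu0 : u ≠ 0 := by
      rintro rfl
      exact hmL.ne_zero (by rw [huv, zero_mul])
    have hv0 : v ≠ 0 := by
      rintro rfl
      exact hmL.ne_zero (by rw [huv, mul_zero])
    have hu₁m : (u * Polynomial.C u.leadingCoeff⁻¹).Monic := monic_mul_leadingCoeff_inv hu0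
    have hv₁m : (v * Polynomial.C v.leadingCoeff⁻¹).Monic := monic_mul_leadingCoeff_inv hv0
    have hlc : u.leadingCoeff * v.leadingCoeff = 1 := by
      have h1 : (π.map (algebraMap K L)).leadingCoeff = 1 := hmL
      rw [huv, Polynomial.leadingCoeff_mul] at h1
      exact h1
    have huv₁ : (u * Polynomial.C u.leadingCoeff⁻¹) * (v * Polynomial.C v.leadingCoeff⁻¹)
        = π.map (algebraMap K L) := by
      have h2 : (u * Polynomial.C u.leadingCoeff⁻¹) * (v * Polynomial.C v.leadingCoeff⁻¹)
          = (u * v) * Polynomial.C ((u.leadingCoeff * v.leadingCoeff)⁻¹) := by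
        rw [mul_inv, Polynomial.C_mul]
        ring
      rw [h2, hlc, inv_one, Polynomial.C_1, mul_one, ← huv]
    obtain ⟨u₀, hu₀⟩ := monic_dvd_lift halg hm hu₁m ⟨_, huv₁.symm⟩
    obtain ⟨v₀, hv₀⟩ := monic_dvd_lift halg hm hv₁m
      ⟨u * Polynomial.C u.leadingCoeff⁻¹, by rw [← huv₁]; ring⟩
    have hπuv : π = u₀ * v₀ := by
      apply Polynomial.map_injective _ (algebraMap K L).injective
      rw [Polynomial.map_mul, hu₀, hv₀, huv₁]
    have hulc : u.leadingCoeff ≠ 0 := Polynomial.leadingCoeff_ne_zero.mpr hu0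
    have hvlc : v.leadingCoeff ≠ 0 := Polynomial.leadingCoeff_ne_zero.mpr hv0
    rcases hirr.isUnit_or_isUnit hπuv with h | h
    · left
      have h1 : IsUnit (u * Polynomial.C u.leadingCoeff⁻¹) := by
        rw [← hu₀, ← Polynomial.coe_mapRingHom]
        exact h.map (Polynomial.mapRingHom (algebraMap K L))
      have h2 : u = (u * Polynomial.C u.leadingCoeff⁻¹) * Polynomial.C u.leadingCoeff := by
        rw [mul_assoc, ← Polynomial.C_mul, inv_mul_cancel₀ hulc, Polynomial.C_1, mul_one]
      rw [h2]
      exact h1.mul (Polynomial.isUnit_C.mpr hulc.isUnit)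
    · right
      have h1 : IsUnit (v * Polynomial.C v.leadingCoeff⁻¹) := by
        rw [← hv₀, ← Polynomial.coe_mapRingHom]
        exact h.map (Polynomial.mapRingHom (algebraMap K L))
      have h2 : v = (v * Polynomial.C v.leadingCoeff⁻¹) * Polynomial.C v.leadingCoeff := by
        rw [mul_assoc, ← Polynomial.C_mul, inv_mul_cancel₀ hvlc, Polynomial.C_1, mul_one]
      rw [h2]
      exact h1.mul (Polynomial.isUnit_C.mpr hvlc.isUnit)

theorem algebraMap_mv_eq (m : ℕ) :
    algebraMap K (MvPolynomial (Fin m) L)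
      = (MvPolynomial.C : L →+* MvPolynomial (Fin m) L).comp (algebraMap K L) :=
  RingHom.ext fun _ => rfl

theorem prime_map_of_closed
    (halg : ∀ x : L, IsAlgebraic K x → x ∈ (algebraMap K L).range) (m : ℕ)
    (π : Polynomial K) (hπ : Prime π) :
    Prime (π.map (algebraMap K (MvPolynomial (Fin m) L))) := by
  classical
  have hπ0 : π ≠ 0 := hπ.ne_zero
  obtain ⟨u, hu⟩ := associated_normalize π
  suffices h : Prime ((normalize π).map (algebraMap K (MvPolynomial (Fin m) L))) by
    have hassoc : Associated (π.map (algebraMap K (MvPolynomial (Fin m) L)))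
        ((normalize π).map (algebraMap K (MvPolynomial (Fin m) L))) := by
      refine ⟨Units.map (Polynomial.mapRingHom
        (algebraMap K (MvPolynomial (Fin m) L))).toMonoidHom u, ?_⟩
      rw [← hu, Polynomial.map_mul]
      congr 1
    exact hassoc.symm.prime h
  have hm : (normalize π).Monic := Polynomial.monic_normalize hπ0
  have hirr : Irreducible (normalize π) := ((associated_normalize π).prime hπ).irreducible
  have hLirr : Irreducible ((normalize π).map (algebraMap K L)) :=
    irreducible_map_of_closed halg hm hirr
  have hLprime : Prime ((normalize π).map (algebraMap K L)) := by
    have hne : (normalize π).map (algebraMap K L) ≠ 0 := (hm.map _).ne_zero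
    have hmax := PrincipalIdealRing.isMaximal_of_irreducible hLirr
    exact (Ideal.span_singleton_prime hne).mp hmax.isPrime
  have hCprime : Prime (MvPolynomial.C ((normalize π).map (algebraMap K L)) :
      MvPolynomial (Fin m) (Polynomial L)) :=
    (MvPolynomial.prime_C_iff (Fin m)).mpr hLprime
  let G : Polynomial (MvPolynomial (Fin m) L) ≃+* MvPolynomial (Fin m) (Polynomial L) :=
    (MvPolynomial.optionEquivLeft L (Fin m)).symm.toRingEquiv.trans
      (MvPolynomial.optionEquivRight L (Fin m)).toRingEquiv
  have hGcomp : (G : Polynomial (MvPolynomial (Fin m) L) →+* MvPolynomial (Fin m) (Polynomial L)).comp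
      (Polynomial.mapRingHom (MvPolynomial.C : L →+* MvPolynomial (Fin m) L))
      = (MvPolynomial.C : Polynomial L →+* MvPolynomial (Fin m) (Polynomial L)) := by
    apply Polynomial.ringHom_ext
    · intro a
      show G (Polynomial.map (MvPolynomial.C : L →+* MvPolynomial (Fin m) L)
        (Polynomial.C a)) = MvPolynomial.C (Polynomial.C a)
      rw [Polynomial.map_C]
      show (MvPolynomial.optionEquivRight L (Fin m))
        ((MvPolynomial.optionEquivLeft L (Fin m)).symm
          (Polynomial.C (MvPolynomial.C a))) = MvPolynomial.C (Polynomial.C a)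
      rw [← MvPolynomial.optionEquivLeft_C, AlgEquiv.symm_apply_apply,
        MvPolynomial.optionEquivRight_C]
    · show G (Polynomial.map (MvPolynomial.C : L →+* MvPolynomial (Fin m) L)
        Polynomial.X) = MvPolynomial.C Polynomial.X
      rw [Polynomial.map_X]
      show (MvPolynomial.optionEquivRight L (Fin m))
        ((MvPolynomial.optionEquivLeft L (Fin m)).symm Polynomial.X)
          = MvPolynomial.C Polynomial.X
      rw [← MvPolynomial.optionEquivLeft_X_none, AlgEquiv.symm_apply_apply,
        MvPolynomial.optionEquivRight_X_none]
  have hGπ : G ((normalize π).map (algebraMap K (MvPolynomial (Fin m) L)))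
      = MvPolynomial.C ((normalize π).map (algebraMap K L)) := by
    rw [algebraMap_mv_eq m, ← Polynomial.map_map]
    have := RingHom.congr_fun hGcomp ((normalize π).map (algebraMap K L))
    rw [RingHom.comp_apply, Polynomial.coe_mapRingHom] at this
    exact this
  have hPrime : Prime (G ((normalize π).map (algebraMap K (MvPolynomial (Fin m) L)))) := by
    rw [hGπ]
    exact hCprime
  exact (MulEquiv.prime_iff G).mp hPrime

end Descent

/-! ### Content algebra implies algebraically closed -/

section Converse

variable {K L A : Type*} [Field K] [Field L] [CommRing A] [IsDomain A]
variable [Algebra K L] [Algebra L A] [Algebra K A] [IsScalarTower K L A]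

theorem closed_of_content
    (hca : IsContentAlgebra (Polynomial.mapRingHom (algebraMap K A))) :
    ∀ x : L, IsAlgebraic K x → x ∈ (algebraMap K L).range := by
  intro θ hθ
  by_contra hθK
  obtain ⟨hOR, hFF, hDM⟩ := hca
  have hint : IsIntegral K θ := hθ.isIntegral
  have hpm : (minpoly K θ).Monic := minpoly.monic hint
  have hinj : Function.Injective (algebraMap K A) := (algebraMap K A).injective
  have hLinj : Function.Injective (algebraMap L A) := (algebraMap L A).injective
  set f : Polynomial A := Polynomial.X - Polynomial.C (algebraMap L A θ) with hf
  -- the content of f is the unit ideal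
  have hcf : ORContent (Polynomial.mapRingHom (algebraMap K A)) f = ⊤ := by
    refine eq_top_iff.mpr (le_sInf fun I hI => ?_)
    have hI' : f ∈ Ideal.map (Polynomial.mapRingHom (algebraMap K A)) I := hI
    obtain ⟨r, hr⟩ := (IsPrincipalIdealRing.principal I).principal
    rw [Ideal.submodule_span_eq] at hr
    rw [hr, Ideal.map_span, Set.image_singleton, Ideal.mem_span_singleton,
      Polynomial.coe_mapRingHom] at hI'
    obtain ⟨h, hh⟩ := hI'
    have hf_ne : f ≠ 0 := Polynomial.X_sub_C_ne_zero _
    have hr0 : r ≠ 0 := by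
      rintro rfl
      rw [Polynomial.map_zero, zero_mul] at hh
      exact hf_ne hh
    have hmr0 : r.map (algebraMap K A) ≠ 0 := by
      intro h0
      exact hr0 ((Polynomial.map_eq_zero_iff hinj).mp h0)
    have hh0 : h ≠ 0 := by
      rintro rfl
      rw [mul_zero] at hh
      exact hf_ne hh
    have hdeg : (r.map (algebraMap K A)).natDegree + h.natDegree = 1 := by
      have h1 := congrArg Polynomial.natDegree hh
      rw [Polynomial.natDegree_mul hmr0 hh0, hf, Polynomial.natDegree_X_sub_C] at h1
      omega
    have hmapdeg : (r.map (algebraMap K A)).natDegree = r.natDegree :=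
      Polynomial.natDegree_map_eq_of_injective hinj r
    have hcases : r.natDegree = 0 ∨ r.natDegree = 1 := by omega
    rw [hr]
    rcases hcases with h0 | h1
    · have hrC : r = Polynomial.C (r.coeff 0) := Polynomial.eq_C_of_natDegree_eq_zero h0
      have hc0 : r.coeff 0 ≠ 0 := by
        intro hc
        rw [hc, Polynomial.C_0] at hrC
        exact hr0 hrC
      have hru : IsUnit r := by
        rw [hrC]
        exact Polynomial.isUnit_C.mpr hc0.isUnit
      rw [Ideal.span_singleton_eq_top.mpr hru]
    · exfalso
      have hhdeg : h.natDegree = 0 := by omega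
      have hhC : h = Polynomial.C (h.coeff 0) := Polynomial.eq_C_of_natDegree_eq_zero hhdeg
      rw [hhC] at hh
      have e1 : (1 : A) = algebraMap K A (r.coeff 1) * h.coeff 0 := by
        have h1 := congrArg (fun q : Polynomial A => q.coeff 1) hh
        simpa [hf, Polynomial.coeff_mul_C, Polynomial.coeff_map] using h1
      have e0 : -(algebraMap L A θ) = algebraMap K A (r.coeff 0) * h.coeff 0 := by
        have h1 := congrArg (fun q : Polynomial A => q.coeff 0) hh
        simpa [hf, Polynomial.coeff_mul_C, Polynomial.coeff_map] using h1
      have hr1 : r.coeff 1 ≠ 0 := by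
        have hlc := Polynomial.leadingCoeff_ne_zero.mpr hr0
        rwa [Polynomial.leadingCoeff, h1] at hlc
      have hr1A : algebraMap K A (r.coeff 1) ≠ 0 := by
        intro h0
        exact hr1 (hinj (by rw [h0, map_zero]))
      set c : K := -(r.coeff 0) / r.coeff 1 with hc
      have hrc : r.coeff 1 * c = -(r.coeff 0) := by
        rw [hc]
        field_simp
      have key : algebraMap K A (r.coeff 1) * (algebraMap L A θ)
          = algebraMap K A (r.coeff 1) * algebraMap K A c := by
        rw [← map_mul, hrc, map_neg]
        linear_combination (-(algebraMap K A (r.coeff 1))) * e0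
          + (algebraMap K A (r.coeff 0)) * e1
      have hθA : algebraMap L A θ = algebraMap K A c := mul_left_cancel₀ hr1A key
      apply hθK
      refine ⟨c, ?_⟩
      rw [IsScalarTower.algebraMap_apply K L A] at hθA
      exact (hLinj hθA).symm
  -- the cofactor g of (x - θ) in (minpoly θ) over A
  have hroot : Polynomial.IsRoot ((minpoly K θ).map (algebraMap K L)) θ := by
    show Polynomial.eval θ ((minpoly K θ).map (algebraMap K L)) = 0
    rw [Polynomial.eval_map, ← Polynomial.aeval_def]
    exact minpoly.aeval K θ
  set q : Polynomial L := (minpoly K θ).map (algebraMap K L) /ₘ (Polynomial.X - Polynomial.C θ)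
    with hq
  have hq' : (Polynomial.X - Polynomial.C θ) * q = (minpoly K θ).map (algebraMap K L) :=
    Polynomial.mul_divByMonic_eq_iff_isRoot.mpr hroot
  set g : Polynomial A := q.map (algebraMap L A) with hg
  have hfg : f * g = (minpoly K θ).map (algebraMap K A) := by
    have h1 := congrArg (Polynomial.map (algebraMap L A)) hq'
    rw [Polynomial.map_mul, Polynomial.map_sub, Polynomial.map_X, Polynomial.map_C,
      Polynomial.map_map, ← IsScalarTower.algebraMap_eq K L A] at h1
    exact h1
  -- content comparison via the Dedekind–Mertens formula
  have hcg : ORContent (Polynomial.mapRingHom (algebraMap K A)) g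
      ≤ Ideal.span {minpoly K θ} := by
    have hmem : f * g ∈ Ideal.map (Polynomial.mapRingHom (algebraMap K A))
        (Ideal.span {minpoly K θ}) := by
      rw [Ideal.map_span, Set.image_singleton, Ideal.mem_span_singleton,
        Polynomial.coe_mapRingHom, hfg]
    have hfg' : ORContent (Polynomial.mapRingHom (algebraMap K A)) (f * g)
        ≤ Ideal.span {minpoly K θ} := orcontent_le_of_mem _ hmem
    obtain ⟨N, hN, hDMf⟩ := hDM f g
    rw [hcf, ← Ideal.one_eq_top, one_pow, one_pow, one_mul, one_mul] at hDMf
    rw [hDMf]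
    exact hfg'
  have hpdvd : (minpoly K θ).map (algebraMap K A) ∣ g := by
    have h1 := hOR g
    have h2 := Ideal.map_mono hcg h1
    rw [Ideal.map_span, Set.image_singleton, Ideal.mem_span_singleton,
      Polynomial.coe_mapRingHom] at h2
    exact h2
  -- degree contradiction
  have hd1 : 0 < (minpoly K θ).natDegree := minpoly.natDegree_pos hint
  have hq0 : q ≠ 0 := by
    intro h0
    rw [h0, mul_zero] at hq'
    exact (hpm.map (algebraMap K L)).ne_zero hq'.symm
  have hqdeg : q.natDegree = (minpoly K θ).natDegree - 1 := by
    rw [hq, Polynomial.natDegree_divByMonic _ (Polynomial.monic_X_sub_C θ),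
      hpm.natDegree_map, Polynomial.natDegree_X_sub_C]
  have hg0 : g ≠ 0 := by
    intro h0
    exact hq0 ((Polynomial.map_eq_zero_iff hLinj).mp h0)
  have hgdeg : g.natDegree = (minpoly K θ).natDegree - 1 := by
    rw [hg, Polynomial.natDegree_map_eq_of_injective hLinj q, hqdeg]
  obtain ⟨w, hw⟩ := hpdvd
  have hw0 : w ≠ 0 := by
    rintro rfl
    rw [mul_zero] at hw
    exact hg0 hw
  have hbig : g.natDegree = (minpoly K θ).natDegree + w.natDegree := by
    rw [hw, Polynomial.natDegree_mul ((hpm.map (algebraMap K A)).ne_zero) hw0,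
      hpm.natDegree_map]
  omega

end Converse

end ORProof

/-- For a field extension `L/K` and `n ≥ 1`, the map
`K[x] → L[x₁,…,xₙ]`, `x ↦ x₁`, makes `L[x₁,…,xₙ]` a free `K[x]`-module, and it is a
content algebra if and only if `K` is algebraically closed in `L`. -/
theorem polynomial_content_iff_algebraically_closed_in {K L : Type*} [Field K] [Field L]
    [Algebra K L] (n : ℕ) (hn : 0 < n) :
    RingHomFree
      (Polynomial.eval₂RingHom
        ((MvPolynomial.C : L →+* MvPolynomial (Fin n) L).comp (algebraMap K L))
        (MvPolynomial.X ⟨0, hn⟩)) ∧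
    (IsContentAlgebra
        (Polynomial.eval₂RingHom
          ((MvPolynomial.C : L →+* MvPolynomial (Fin n) L).comp (algebraMap K L))
          (MvPolynomial.X ⟨0, hn⟩)) ↔
      ∀ x : L, IsAlgebraic K x → x ∈ (algebraMap K L).range) := by
  classical
  obtain ⟨m, rfl⟩ : ∃ m, n = m + 1 := ⟨n - 1, by omega⟩
  set φ : Polynomial K →+* MvPolynomial (Fin (m + 1)) L :=
    Polynomial.eval₂RingHom
      ((MvPolynomial.C : L →+* MvPolynomial (Fin (m + 1)) L).comp (algebraMap K L))
      (MvPolynomial.X ⟨0, hn⟩) with hφ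
  set e : MvPolynomial (Fin (m + 1)) L ≃+* Polynomial (MvPolynomial (Fin m) L) :=
    (MvPolynomial.finSuccEquiv L m).toRingEquiv with he_def
  have h00 : (⟨0, hn⟩ : Fin (m + 1)) = 0 := by
    ext
    simp
  have he : (e : MvPolynomial (Fin (m + 1)) L →+* Polynomial (MvPolynomial (Fin m) L)).comp φ
      = Polynomial.mapRingHom (algebraMap K (MvPolynomial (Fin m) L)) := by
    apply Polynomial.ringHom_ext
    · intro a
      simp only [hφ, RingHom.comp_apply, Polynomial.coe_eval₂RingHom, Polynomial.eval₂_C,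
        RingHom.coe_coe, Polynomial.coe_mapRingHom, Polynomial.map_C, he_def,
        AlgEquiv.toRingEquiv_eq_coe, AlgEquiv.coe_ringEquiv]
      rw [← MvPolynomial.algebraMap_eq, AlgEquiv.commutes, Polynomial.algebraMap_apply,
        ← IsScalarTower.algebraMap_apply K L (MvPolynomial (Fin m) L)]
    · simp only [hφ, RingHom.comp_apply, Polynomial.coe_eval₂RingHom, Polynomial.eval₂_X,
        RingHom.coe_coe, Polynomial.coe_mapRingHom, Polynomial.map_X, he_def,
        AlgEquiv.toRingEquiv_eq_coe, AlgEquiv.coe_ringEquiv, h00]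
      exact MvPolynomial.finSuccEquiv_X_zero
  -- a basis of `MvPolynomial (Fin m) L` over `K`
  let bL : Module.Basis _ K L := Module.Basis.ofVectorSpace K L
  let bA : Module.Basis _ L (MvPolynomial (Fin m) L) := MvPolynomial.basisMonomials (Fin m) L
  let b : Module.Basis _ K (MvPolynomial (Fin m) L) := bL.smulTower bA
  constructor
  · apply ORProof.ringHomFree_of_comp e φ
    rw [he]
    exact ORProof.freeAux b
  · have hiff := ORProof.isContentAlgebra_comp e φ
    rw [he] at hiff
    rw [← hiff]
    constructor
    · intro hca
      exact ORProof.closed_of_content (A := MvPolynomial (Fin m) L) hca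
    · intro halg
      exact ORProof.isContentAlgebra_of_prime b
        (fun π hπ => ORProof.prime_map_of_closed halg m π hπ)
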